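/- For n ≥ 2 and any doubly pure element a of the Cayley–Dickson algebra A_n with ‖a‖ = 1, the four-dimensional real linear span ℍ_a of {e₀, ã, a, ẽ₀} is closed under multiplication, and the linear map determined by e₀ ↦ e₀, e₁ ↦ ã, e₂ ↦ a, e₃ ↦ ẽ₀ is an algebra isomorphism from the quaternions A_2 = ℍ onto ℍ_a. -/

import Mathlib

noncomputable section

/-- The Cayley–Dickson algebra `A n` of dimension `2^n` over `ℝ`:
`A 0 = ℝ` and `A (n+1) = A n × A n`. -/
def CD : ℕ → Type
  | 0 => ℝ
  | n + 1 => CD n × CD n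

namespace CD

instance instAddCommGroup : (n : ℕ) → AddCommGroup (CD n)
  | 0 => inferInstanceAs (AddCommGroup ℝ)
  | n + 1 =>
    letI := instAddCommGroup n
    inferInstanceAs (AddCommGroup (CD n × CD n))

instance instModule : (n : ℕ) → Module ℝ (CD n)
  | 0 => inferInstanceAs (Module ℝ ℝ)
  | n + 1 =>
    letI := instAddCommGroup n
    letI := instModule n
    inferInstanceAs (Module ℝ (CD n × CD n))

/-- Conjugation: `x̄ = x` on `ℝ` and `(x₁,x₂)‾ = (x̄₁, -x₂)`. -/
protected def conj : {n : ℕ} → CD n → CD n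
  | 0, x => x
  | _ + 1, x => (CD.conj x.1, -x.2)

/-- Cayley–Dickson multiplication: `(a,b)(x,y) = (ax - ȳb, ya + bx̄)`. -/
protected def mul : {n : ℕ} → CD n → CD n → CD n
  | 0, x, y => (show ℝ from x) * (show ℝ from y)
  | _ + 1, x, y =>
    (CD.mul x.1 y.1 - CD.mul (CD.conj y.2) x.2,
     CD.mul y.2 x.1 + CD.mul x.2 (CD.conj y.1))

instance instMul (n : ℕ) : Mul (CD n) := ⟨CD.mul⟩

/-- The multiplicative unit `e₀` of `A n`. -/
def e0 : (n : ℕ) → CD n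
  | 0 => (1 : ℝ)
  | n + 1 => (e0 n, 0)

/-- The element `ẽ₀ = (0, e₀)` of `A n` (junk value `0` for `n = 0`). -/
def te0 : (n : ℕ) → CD n
  | 0 => 0
  | n + 1 => (0, e0 n)

/-- The "complexification" `α̃ = (-b, a)` of `α = (a,b)` (junk value `0` for `n = 0`);
note `α̃ = α·ẽ₀`. -/
def tilde : {n : ℕ} → CD n → CD n
  | 0, _ => 0
  | _ + 1, x => (-x.2, x.1)

/-- The standard inner product on `A n ≅ ℝ^{2^n}`. -/
protected def inner : {n : ℕ} → CD n → CD n → ℝ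
  | 0, x, y => (show ℝ from x) * (show ℝ from y)
  | _ + 1, x, y => CD.inner x.1 y.1 + CD.inner x.2 y.2

/-- The euclidean norm on `A n`. -/
protected def norm {n : ℕ} (x : CD n) : ℝ := Real.sqrt (CD.inner x x)

/-- `x` is pure if its trace `t(x) = x + x̄` vanishes. -/
def IsPure {n : ℕ} (x : CD n) : Prop := x + CD.conj x = 0

/-- `x = (a,b)` is doubly pure if both `a` and `b` are pure
(equivalently, both `x` and `x̃` are pure). -/
def IsDoublyPure : {n : ℕ} → CD n → Prop
  | 0, x => x = 0
  | _ + 1, x => IsPure x.1 ∧ IsPure x.2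

/-- The associator `(x,y,z) = (xy)z - x(yz)`. -/
def assoc {n : ℕ} (x y z : CD n) : CD n := (x * y) * z - x * (y * z)

/-- The subspace `ℍ_a`: the real span of `{e₀, ã, a, ẽ₀}`. -/
def Ha {n : ℕ} (a : CD n) : Submodule ℝ (CD n) :=
  Submodule.span ℝ {e0 n, tilde a, a, te0 n}

/-- The orthogonal complement `ℍ_a^⊥` of `ℍ_a` in `A n`. -/
def HaPerp {n : ℕ} (a : CD n) : Set (CD n) :=
  {x | ∀ y ∈ Ha a, CD.inner x y = 0}

/-- The element `ε = (ẽ₀, 0)` of `A (n+1)`. -/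
def eps (n : ℕ) : CD (n + 1) := (te0 n, 0)

/-- `α̂ = (b,a)` for `α = (a,b) ∈ A (n+1)`. -/
def hat {n : ℕ} (x : CD (n + 1)) : CD (n + 1) := (x.2, x.1)

/-- The element `(a, b)` of `A (n+1) = A n × A n`. -/
def pair {n : ℕ} (a b : CD n) : CD (n + 1) := (a, b)

end CD

/-- The canonical basis vector `e₁` of `A 2 = ℍ`. -/
def q1 : CD 2 := (CD.te0 1, 0)
/-- The canonical basis vector `e₂` of `A 2 = ℍ`. -/
def q2 : CD 2 := (0, CD.e0 1)
/-- The canonical basis vector `e₃` of `A 2 = ℍ`. -/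
def q3 : CD 2 := (0, CD.te0 1)


namespace CDX
open CD

variable {n : ℕ}

lemma mul_succ (x y : CD (n+1)) :
    x * y = (x.1 * y.1 - CD.conj y.2 * x.2, y.2 * x.1 + x.2 * CD.conj y.1) := rfl
lemma conj_succ (x : CD (n+1)) : CD.conj x = (CD.conj x.1, -x.2) := rfl
lemma inner_succ (x y : CD (n+1)) : CD.inner x y = CD.inner x.1 y.1 + CD.inner x.2 y.2 := rfl
lemma inner_zeroc (x y : CD 0) : CD.inner x y = (show ℝ from x) * (show ℝ from y) := rfl

lemma conj_add : ∀ {n : ℕ} (x y : CD n), CD.conj (x + y) = CD.conj x + CD.conj y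
  | 0, _, _ => rfl
  | n + 1, x, y => by
    refine Prod.ext ?_ ?_
    · show CD.conj (x.1 + y.1) = CD.conj x.1 + CD.conj y.1
      exact conj_add x.1 y.1
    · show -(x.2 + y.2) = -x.2 + -y.2
      exact neg_add _ _

lemma conj_smul : ∀ {n : ℕ} (r : ℝ) (x : CD n), CD.conj (r • x) = r • CD.conj x
  | 0, _, _ => rfl
  | n + 1, r, x => by
    refine Prod.ext ?_ ?_
    · show CD.conj (r • x.1) = r • CD.conj x.1
      exact conj_smul r x.1
    · show -(r • x.2) = r • (-x.2)
      exact (smul_neg r x.2).symm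

lemma conj_neg (x : CD n) : CD.conj (-x) = -CD.conj x := by
  rw [← neg_one_smul ℝ x, conj_smul, neg_one_smul]

lemma conj_zero : CD.conj (0 : CD n) = 0 := by
  have h := conj_smul (0:ℝ) (0 : CD n)
  rwa [zero_smul, zero_smul] at h

lemma conj_conj : ∀ {n : ℕ} (x : CD n), CD.conj (CD.conj x) = x
  | 0, _ => rfl
  | n + 1, x => by
    refine Prod.ext ?_ ?_
    · show CD.conj (CD.conj x.1) = x.1
      exact conj_conj x.1
    · show -(-x.2) = x.2
      exact neg_neg x.2

lemma conj_e0 : ∀ {n : ℕ}, CD.conj (e0 n) = e0 n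
  | 0 => rfl
  | n + 1 => by
    refine Prod.ext ?_ ?_
    · show CD.conj (e0 n) = e0 n
      exact conj_e0
    · show -(0 : CD n) = 0
      exact neg_zero

lemma distrib_key : ∀ {n : ℕ} (x y z : CD n),
    x * (y + z) = x * y + x * z ∧ (y + z) * x = y * x + z * x
  | 0, x, y, z => ⟨mul_add (show ℝ from x) y z, add_mul (show ℝ from y) z x⟩
  | n + 1, x, y, z => by
    constructor
    · refine Prod.ext ?_ ?_
      · show x.1 * (y.1 + z.1) - CD.conj (y.2 + z.2) * x.2 =
          (x.1 * y.1 - CD.conj y.2 * x.2) + (x.1 * z.1 - CD.conj z.2 * x.2)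
        rw [(distrib_key x.1 y.1 z.1).1, conj_add, (distrib_key x.2 (CD.conj y.2) (CD.conj z.2)).2]
        abel
      · show (y.2 + z.2) * x.1 + x.2 * CD.conj (y.1 + z.1) =
          (y.2 * x.1 + x.2 * CD.conj y.1) + (z.2 * x.1 + x.2 * CD.conj z.1)
        rw [(distrib_key x.1 y.2 z.2).2, conj_add, (distrib_key x.2 (CD.conj y.1) (CD.conj z.1)).1]
        abel
    · refine Prod.ext ?_ ?_
      · show (y.1 + z.1) * x.1 - CD.conj x.2 * (y.2 + z.2) =
          (y.1 * x.1 - CD.conj x.2 * y.2) + (z.1 * x.1 - CD.conj x.2 * z.2)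
        rw [(distrib_key x.1 y.1 z.1).2, (distrib_key (CD.conj x.2) y.2 z.2).1]
        abel
      · show x.2 * (y.1 + z.1) + (y.2 + z.2) * CD.conj x.1 =
          (x.2 * y.1 + y.2 * CD.conj x.1) + (x.2 * z.1 + z.2 * CD.conj x.1)
        rw [(distrib_key x.2 y.1 z.1).1, (distrib_key (CD.conj x.1) y.2 z.2).2]
        abel

lemma mul_add' (x y z : CD n) : x * (y + z) = x * y + x * z := (distrib_key x y z).1
lemma add_mul' (x y z : CD n) : (x + y) * z = x * z + y * z := (distrib_key z x y).2

lemma smul_key : ∀ {n : ℕ} (r : ℝ) (x y : CD n),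
    (r • x) * y = r • (x * y) ∧ x * (r • y) = r • (x * y)
  | 0, r, x, y => ⟨smul_mul_assoc r (show ℝ from x) y, mul_smul_comm r (show ℝ from x) y⟩
  | n + 1, r, x, y => by
    constructor
    · refine Prod.ext ?_ ?_
      · show (r • x.1) * y.1 - CD.conj y.2 * (r • x.2) = r • (x.1 * y.1 - CD.conj y.2 * x.2)
        rw [(smul_key r x.1 y.1).1, (smul_key r (CD.conj y.2) x.2).2, smul_sub]
      · show y.2 * (r • x.1) + (r • x.2) * CD.conj y.1 = r • (y.2 * x.1 + x.2 * CD.conj y.1)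
        rw [(smul_key r y.2 x.1).2, (smul_key r x.2 (CD.conj y.1)).1, smul_add]
    · refine Prod.ext ?_ ?_
      · show x.1 * (r • y.1) - CD.conj (r • y.2) * x.2 = r • (x.1 * y.1 - CD.conj y.2 * x.2)
        rw [(smul_key r x.1 y.1).2, conj_smul, (smul_key r (CD.conj y.2) x.2).1, smul_sub]
      · show (r • y.2) * x.1 + x.2 * CD.conj (r • y.1) = r • (y.2 * x.1 + x.2 * CD.conj y.1)
        rw [(smul_key r y.2 x.1).1, conj_smul, (smul_key r x.2 (CD.conj y.1)).2, smul_add]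

lemma smul_mul' (r : ℝ) (x y : CD n) : (r • x) * y = r • (x * y) := (smul_key r x y).1
lemma mul_smul' (r : ℝ) (x y : CD n) : x * (r • y) = r • (x * y) := (smul_key r x y).2

lemma neg_mul' (x y : CD n) : (-x) * y = -(x * y) := by
  rw [← neg_one_smul ℝ x, smul_mul', neg_one_smul]

lemma mul_neg' (x y : CD n) : x * (-y) = -(x * y) := by
  rw [← neg_one_smul ℝ y, mul_smul', neg_one_smul]

lemma zero_mul' (x : CD n) : (0 : CD n) * x = 0 := by
  have h := smul_mul' (0:ℝ) x x
  rwa [zero_smul, zero_smul] at h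

lemma mul_zero' (x : CD n) : x * (0 : CD n) = 0 := by
  have h := mul_smul' (0:ℝ) x x
  rwa [zero_smul, zero_smul] at h

lemma e0_mul_mul_e0 : ∀ {n : ℕ} (x : CD n), e0 n * x = x ∧ x * e0 n = x
  | 0, x => ⟨one_mul (show ℝ from x), mul_one (show ℝ from x)⟩
  | n + 1, x => by
    constructor
    · refine Prod.ext ?_ ?_
      · show e0 n * x.1 - CD.conj x.2 * 0 = x.1
        rw [(e0_mul_mul_e0 x.1).1, mul_zero', sub_zero]
      · show x.2 * e0 n + (0 : CD n) * CD.conj x.1 = x.2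
        rw [(e0_mul_mul_e0 x.2).2, zero_mul', add_zero]
    · refine Prod.ext ?_ ?_
      · show x.1 * e0 n - CD.conj (0 : CD n) * x.2 = x.1
        rw [(e0_mul_mul_e0 x.1).2, conj_zero, zero_mul', sub_zero]
      · show (0 : CD n) * x.1 + x.2 * CD.conj (e0 n) = x.2
        rw [conj_e0, (e0_mul_mul_e0 x.2).2, zero_mul', zero_add]

lemma e0_mul (x : CD n) : e0 n * x = x := (e0_mul_mul_e0 x).1
lemma mul_e0 (x : CD n) : x * e0 n = x := (e0_mul_mul_e0 x).2

lemma inner_add_right : ∀ {n : ℕ} (x y z : CD n), CD.inner x (y + z) = CD.inner x y + CD.inner x z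
  | 0, x, y, z => mul_add (show ℝ from x) y z
  | n + 1, x, y, z => by
    show CD.inner x.1 (y.1 + z.1) + CD.inner x.2 (y.2 + z.2) = _
    rw [inner_add_right, inner_add_right, inner_succ, inner_succ]
    ring

lemma inner_smul_right : ∀ {n : ℕ} (r : ℝ) (x y : CD n), CD.inner x (r • y) = r * CD.inner x y
  | 0, r, x, y => mul_left_comm (show ℝ from x) r y
  | n + 1, r, x, y => by
    show CD.inner x.1 (r • y.1) + CD.inner x.2 (r • y.2) = _
    rw [inner_smul_right, inner_smul_right, inner_succ]
    ring

lemma inner_symm : ∀ {n : ℕ} (x y : CD n), CD.inner x y = CD.inner y x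
  | 0, x, y => mul_comm (show ℝ from x) y
  | n + 1, x, y => by rw [inner_succ, inner_succ, inner_symm x.1, inner_symm x.2]

lemma inner_zero_right (x : CD n) : CD.inner x 0 = 0 := by
  have h := inner_smul_right (0:ℝ) x x
  rwa [zero_smul, zero_mul] at h

lemma inner_zero_left (x : CD n) : CD.inner 0 x = 0 := by
  rw [inner_symm, inner_zero_right]

lemma inner_neg_right (x y : CD n) : CD.inner x (-y) = -CD.inner x y := by
  rw [← neg_one_smul ℝ y, inner_smul_right, neg_one_mul]

lemma inner_neg_left (x y : CD n) : CD.inner (-x) y = -CD.inner x y := by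
  rw [inner_symm, inner_neg_right, inner_symm]

lemma inner_self_nonneg : ∀ {n : ℕ} (x : CD n), 0 ≤ CD.inner x x
  | 0, x => mul_self_nonneg (show ℝ from x)
  | n + 1, x => add_nonneg (inner_self_nonneg x.1) (inner_self_nonneg x.2)

lemma inner_e0_e0 : ∀ {n : ℕ}, CD.inner (e0 n) (e0 n) = 1
  | 0 => mul_one 1
  | n + 1 => by
    show CD.inner (e0 n) (e0 n) + CD.inner (0 : CD n) 0 = 1
    rw [inner_e0_e0, inner_zero_left, add_zero]

lemma inner_e0_pure : ∀ {n : ℕ} (x : CD n), IsPure x → CD.inner (e0 n) x = 0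
  | 0, x, hx => by
    have h : (show ℝ from x) + (show ℝ from x) = 0 := hx
    have hx0 : (show ℝ from x) = 0 := by linarith
    rw [inner_zeroc, hx0, mul_zero]
  | n + 1, x, hx => by
    have h1 : x.1 + CD.conj x.1 = 0 := congrArg Prod.fst hx
    show CD.inner (e0 n) x.1 + CD.inner (0 : CD n) x.2 = 0
    rw [inner_e0_pure x.1 h1, inner_zero_left, add_zero]

lemma conj_mul_key : ∀ {n : ℕ} (x : CD n),
    CD.conj x * x = (CD.inner x x) • e0 n ∧ x * CD.conj x = (CD.inner x x) • e0 n
  | 0, x => by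
    constructor <;>
    · show (show ℝ from x) * (show ℝ from x) = CD.inner x x * (1:ℝ)
      rw [mul_one]; rfl
  | n + 1, x => by
    have hc1 := conj_mul_key x.1
    have hc2 := conj_mul_key x.2
    constructor
    · refine Prod.ext ?_ ?_
      · show CD.conj x.1 * x.1 - CD.conj x.2 * (-x.2) =
          (CD.inner x.1 x.1 + CD.inner x.2 x.2) • e0 n
        rw [hc1.1, mul_neg', hc2.1, sub_neg_eq_add, add_smul]
      · show x.2 * CD.conj x.1 + (-x.2) * CD.conj x.1 = (CD.inner x x) • (0 : CD n)
        rw [neg_mul', add_neg_cancel, smul_zero]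
    · refine Prod.ext ?_ ?_
      · show x.1 * CD.conj x.1 - CD.conj (-x.2) * x.2 =
          (CD.inner x.1 x.1 + CD.inner x.2 x.2) • e0 n
        rw [hc1.2, conj_neg, neg_mul', hc2.1, sub_neg_eq_add, add_smul]
      · show (-x.2) * x.1 + x.2 * CD.conj (CD.conj x.1) = (CD.inner x x) • (0 : CD n)
        rw [neg_mul', conj_conj, neg_add_cancel, smul_zero]

lemma conj_mul_self (x : CD n) : CD.conj x * x = (CD.inner x x) • e0 n := (conj_mul_key x).1
lemma mul_conj_self (x : CD n) : x * CD.conj x = (CD.inner x x) • e0 n := (conj_mul_key x).2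

lemma pure_conj {x : CD n} (hx : IsPure x) : CD.conj x = -x := by
  have h : x + CD.conj x = 0 := hx
  have := neg_eq_of_add_eq_zero_right h
  rw [← this]


lemma pure_sq {x : CD n} (hx : IsPure x) : x * x = -((CD.inner x x) • e0 n) := by
  have h := conj_mul_self x
  rw [pure_conj hx, neg_mul'] at h
  rw [← h, neg_neg]

lemma pure_neg {x : CD n} (hx : IsPure x) : IsPure (-x) := by
  show -x + CD.conj (-x) = 0
  rw [conj_neg, ← neg_add]
  rw [show x + CD.conj x = 0 from hx, neg_zero]

lemma pure_zero : IsPure (0 : CD n) := by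
  show (0 : CD n) + CD.conj 0 = 0
  rw [conj_zero, add_zero]

lemma inner_neg_neg (x : CD n) : CD.inner (-x) (-x) = CD.inner x x := by
  rw [inner_neg_left, inner_neg_right, neg_neg]

lemma pure_te0 {m : ℕ} : IsPure (te0 (m+1)) := by
  show te0 (m+1) + CD.conj (te0 (m+1)) = 0
  refine Prod.ext ?_ ?_
  · show (0 : CD m) + CD.conj 0 = 0
    rw [conj_zero, add_zero]
  · show e0 m + -(e0 m) = 0
    exact add_neg_cancel _

lemma inner_te0 {m : ℕ} : CD.inner (te0 (m+1)) (te0 (m+1)) = 1 := by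
  show CD.inner (0 : CD m) 0 + CD.inner (e0 m) (e0 m) = 1
  rw [inner_zero_left, inner_e0_e0, zero_add]

section Table

variable {m : ℕ} {b c : CD m}

lemma mul_JJ (hb : IsPure b) (hc : IsPure c)
    (h1 : CD.inner b b + CD.inner c c = 1) :
    pair b c * pair b c = -(e0 (m+1)) := by
  refine Prod.ext ?_ ?_
  · show b * b - CD.conj c * c = -(e0 m)
    rw [pure_sq hb, conj_mul_self]
    rw [show -(CD.inner b b • e0 m) - CD.inner c c • e0 m
        = -((CD.inner b b + CD.inner c c) • e0 m) by rw [add_smul]; abel, h1, one_smul]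
  · show c * b + c * CD.conj b = -(0 : CD m)
    rw [pure_conj hb, mul_neg', add_neg_cancel, neg_zero]

lemma mul_IJ (hc : IsPure c)
    (h1 : CD.inner b b + CD.inner c c = 1) :
    pair (-c) b * pair b c = te0 (m+1) := by
  refine Prod.ext ?_ ?_
  · show (-c) * b - CD.conj c * b = (0 : CD m)
    rw [pure_conj hc, neg_mul', sub_self]
  · show c * (-c) + b * CD.conj b = e0 m
    rw [mul_neg', pure_sq hc, neg_neg, mul_conj_self,
      show CD.inner c c • e0 m + CD.inner b b • e0 m
        = (CD.inner b b + CD.inner c c) • e0 m by rw [add_smul]; abel, h1, one_smul]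

lemma mul_JI (hb : IsPure b) (hc : IsPure c)
    (h1 : CD.inner b b + CD.inner c c = 1) :
    pair b c * pair (-c) b = -(te0 (m+1)) := by
  refine Prod.ext ?_ ?_
  · show b * (-c) - CD.conj b * c = -(0 : CD m)
    rw [pure_conj hb, mul_neg', neg_mul', sub_neg_eq_add, neg_add_cancel, neg_zero]
  · show b * b + c * CD.conj (-c) = -(e0 m)
    rw [conj_neg, pure_conj hc, neg_neg, pure_sq hb, pure_sq hc,
      show -(CD.inner b b • e0 m) + -(CD.inner c c • e0 m)
        = -((CD.inner b b + CD.inner c c) • e0 m) by rw [add_smul]; abel, h1, one_smul]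

lemma mul_JK : pair b c * te0 (m+1) = pair (-c) b := by
  refine Prod.ext ?_ ?_
  · show b * 0 - CD.conj (e0 m) * c = -c
    rw [mul_zero', conj_e0, e0_mul, zero_sub]
  · show e0 m * b + c * CD.conj (0 : CD m) = b
    rw [e0_mul, conj_zero, mul_zero', add_zero]

lemma mul_KJ (hb : IsPure b) (hc : IsPure c) :
    te0 (m+1) * pair b c = pair c (-b) := by
  refine Prod.ext ?_ ?_
  · show (0 : CD m) * b - CD.conj c * e0 m = c
    rw [zero_mul', pure_conj hc, neg_mul', mul_e0, zero_sub, neg_neg]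
  · show c * (0 : CD m) + e0 m * CD.conj b = -b
    rw [mul_zero', pure_conj hb, e0_mul, zero_add]

lemma mul_KJ' (hb : IsPure b) (hc : IsPure c) :
    te0 (m+1) * pair b c = -(pair (-c) b) := by
  rw [mul_KJ hb hc]
  refine Prod.ext ?_ ?_
  · show c = -(-c)
    rw [neg_neg]
  · show -b = -b
    rfl

lemma mul_KK : (te0 (m+1)) * te0 (m+1) = -(e0 (m+1)) := by
  refine Prod.ext ?_ ?_
  · show (0 : CD m) * 0 - CD.conj (e0 m) * e0 m = -(e0 m)
    rw [zero_mul', conj_e0, e0_mul, zero_sub]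
  · show e0 m * (0 : CD m) + e0 m * CD.conj (0 : CD m) = -(0 : CD m)
    rw [mul_zero', conj_zero, mul_zero', add_zero, neg_zero]

lemma mul_II (hb : IsPure b) (hc : IsPure c)
    (h1 : CD.inner b b + CD.inner c c = 1) :
    pair (-c) b * pair (-c) b = -(e0 (m+1)) := by
  refine mul_JJ (pure_neg hc) hb ?_
  rw [inner_neg_neg]
  linarith

lemma mul_IK : pair (-c) b * te0 (m+1) = -(pair b c) := by
  have h := mul_JK (b := -c) (c := b) (m := m)
  rw [h]
  rfl

lemma mul_KI (hb : IsPure b) (hc : IsPure c) :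
    te0 (m+1) * pair (-c) b = pair b c := by
  have h := mul_KJ (pure_neg hc) hb
  rw [h]
  show Prod.mk b (-(-c)) = pair b c
  rw [neg_neg]
  rfl

end Table

/-! CD 2 basis products -/

lemma hb0 : IsPure (0 : CD 1) := pure_zero
lemma hc0 : IsPure (te0 1) := pure_te0
lemma h10 : CD.inner (0 : CD 1) 0 + CD.inner (te0 1) (te0 1) = 1 := by
  rw [inner_zero_left, inner_te0, zero_add]

lemma hq3 : q3 = pair (0 : CD 1) (te0 1) := rfl
lemma hq2 : q2 = te0 2 := rfl
lemma hq1 : q1 = -(pair (-(te0 1)) (0 : CD 1)) := by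
  refine Prod.ext ?_ ?_
  · show te0 1 = -(-(te0 1))
    rw [neg_neg]
  · show (0 : CD 1) = -0
    rw [neg_zero]

lemma q33 : q3 * q3 = -(e0 2) := by rw [hq3]; exact mul_JJ hb0 hc0 h10
lemma q22 : q2 * q2 = -(e0 2) := by rw [hq2]; exact mul_KK
lemma q11 : q1 * q1 = -(e0 2) := by
  rw [hq1, neg_mul', mul_neg', neg_neg]
  exact mul_II hb0 hc0 h10
lemma q13 : q1 * q3 = -q2 := by
  rw [hq1, hq3, neg_mul', hq2, mul_IJ hc0 h10]
lemma q31 : q3 * q1 = q2 := by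
  rw [hq1, hq3, mul_neg', mul_JI hb0 hc0 h10, hq2, neg_neg]
lemma q32 : q3 * q2 = -q1 := by
  rw [hq3, hq2, mul_JK, hq1, neg_neg]
lemma q23 : q2 * q3 = q1 := by
  rw [hq3, hq2, mul_KJ hb0 hc0]
  refine Prod.ext rfl ?_
  show -(0 : CD 1) = (0 : CD 1)
  rw [neg_zero]
lemma q21 : q2 * q1 = -q3 := by
  rw [hq1, hq2, hq3, mul_neg', mul_KI hb0 hc0]
lemma q12 : q1 * q2 = q3 := by
  rw [hq1, hq2, neg_mul', mul_IK, neg_neg, hq3]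

/-- Decomposition of an element of `CD 2` in the basis `e0 2, q1, q2, q3`. -/
lemma decomp (r s t u : ℝ) :
    (((r, s), (t, u)) : CD 2) = r • e0 2 + s • q1 + t • q2 + u • q3 := by
  refine Prod.ext (Prod.ext ?_ ?_) (Prod.ext ?_ ?_)
  · show r = r * 1 + s * 0 + t * 0 + u * 0
    ring
  · show s = r * 0 + s * 1 + t * 0 + u * 0
    ring
  · show t = r * 0 + s * 0 + t * 1 + u * 0
    ring
  · show u = r * 0 + s * 0 + t * 0 + u * 1
    ring

/-- Identify `CD 0` with `ℝ`. -/
def realOf (x : CD 0) : ℝ := x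

/-- The linear map `ℍ = CD 2 → CD (m+1)` determined by `a = (b, c)`. -/
def phi {m : ℕ} (b c : CD m) : CD 2 →ₗ[ℝ] CD (m+1) where
  toFun x := realOf x.1.1 • e0 (m+1) + realOf x.1.2 • pair (-c) b
    + realOf x.2.1 • pair b c + realOf x.2.2 • te0 (m+1)
  map_add' x y := by
    dsimp only
    have h1 : realOf (x + y).1.1 = realOf x.1.1 + realOf y.1.1 := rfl
    have h2 : realOf (x + y).1.2 = realOf x.1.2 + realOf y.1.2 := rfl
    have h3 : realOf (x + y).2.1 = realOf x.2.1 + realOf y.2.1 := rfl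
    have h4 : realOf (x + y).2.2 = realOf x.2.2 + realOf y.2.2 := rfl
    rw [h1, h2, h3, h4]
    module
  map_smul' r x := by
    dsimp only
    have h1 : realOf (r • x).1.1 = r * realOf x.1.1 := rfl
    have h2 : realOf (r • x).1.2 = r * realOf x.1.2 := rfl
    have h3 : realOf (r • x).2.1 = r * realOf x.2.1 := rfl
    have h4 : realOf (r • x).2.2 = r * realOf x.2.2 := rfl
    rw [h1, h2, h3, h4, RingHom.id_apply]
    module

lemma phi_apply {m : ℕ} (b c : CD m) (x : CD 2) :
    phi b c x = realOf x.1.1 • e0 (m+1) + realOf x.1.2 • pair (-c) b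
      + realOf x.2.1 • pair b c + realOf x.2.2 • te0 (m+1) := rfl

lemma phi_e0 {m : ℕ} (b c : CD m) : phi b c (e0 2) = e0 (m+1) := by
  rw [phi_apply, show realOf (e0 2).1.1 = 1 from rfl,
    show realOf (e0 2).1.2 = 0 from rfl,
    show realOf (e0 2).2.1 = 0 from rfl,
    show realOf (e0 2).2.2 = 0 from rfl]
  module

lemma phi_q1 {m : ℕ} (b c : CD m) : phi b c q1 = pair (-c) b := by
  rw [phi_apply, show realOf q1.1.1 = 0 from rfl,
    show realOf q1.1.2 = 1 from rfl,
    show realOf q1.2.1 = 0 from rfl,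
    show realOf q1.2.2 = 0 from rfl]
  module

lemma phi_q2 {m : ℕ} (b c : CD m) : phi b c q2 = pair b c := by
  rw [phi_apply, show realOf q2.1.1 = 0 from rfl,
    show realOf q2.1.2 = 0 from rfl,
    show realOf q2.2.1 = 1 from rfl,
    show realOf q2.2.2 = 0 from rfl]
  module

lemma phi_q3 {m : ℕ} (b c : CD m) : phi b c q3 = te0 (m+1) := by
  rw [phi_apply, show realOf q3.1.1 = 0 from rfl,
    show realOf q3.1.2 = 0 from rfl,
    show realOf q3.2.1 = 0 from rfl,
    show realOf q3.2.2 = 1 from rfl]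
  module


/-- Decomposition of `x : CD 2` in the basis. -/
lemma decomp' (x : CD 2) :
    x = realOf x.1.1 • e0 2 + realOf x.1.2 • q1 + realOf x.2.1 • q2 + realOf x.2.2 • q3 := by
  refine Prod.ext (Prod.ext ?_ ?_) (Prod.ext ?_ ?_)
  · show realOf x.1.1 = realOf x.1.1 * 1 + realOf x.1.2 * 0 + realOf x.2.1 * 0 + realOf x.2.2 * 0
    ring
  · show realOf x.1.2 = realOf x.1.1 * 0 + realOf x.1.2 * 1 + realOf x.2.1 * 0 + realOf x.2.2 * 0
    ring
  · show realOf x.2.1 = realOf x.1.1 * 0 + realOf x.1.2 * 0 + realOf x.2.1 * 1 + realOf x.2.2 * 0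
    ring
  · show realOf x.2.2 = realOf x.1.1 * 0 + realOf x.1.2 * 0 + realOf x.2.1 * 0 + realOf x.2.2 * 1
    ring

section InnerVals

variable {m : ℕ} {b c : CD m}

lemma innEI (hc : IsPure c) : CD.inner (e0 (m+1)) (pair (-c) b) = 0 := by
  show CD.inner (e0 m) (-c) + CD.inner (0 : CD m) b = 0
  rw [inner_neg_right, inner_e0_pure c hc, inner_zero_left, neg_zero, add_zero]

lemma innEJ (hb : IsPure b) : CD.inner (e0 (m+1)) (pair b c) = 0 := by
  show CD.inner (e0 m) b + CD.inner (0 : CD m) c = 0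
  rw [inner_e0_pure b hb, inner_zero_left, add_zero]

lemma innEK : CD.inner (e0 (m+1)) (te0 (m+1)) = 0 := by
  show CD.inner (e0 m) 0 + CD.inner (0 : CD m) (e0 m) = 0
  rw [inner_zero_right, inner_zero_left, add_zero]

lemma innII (h1 : CD.inner b b + CD.inner c c = 1) :
    CD.inner (pair (-c) b) (pair (-c) b) = 1 := by
  show CD.inner (-c) (-c) + CD.inner b b = 1
  rw [inner_neg_neg]
  linarith

lemma innIJ : CD.inner (pair (-c) b) (pair b c) = 0 := by
  show CD.inner (-c) b + CD.inner b c = 0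
  rw [inner_neg_left, inner_symm c b]
  ring

lemma innIK (hb : IsPure b) : CD.inner (pair (-c) b) (te0 (m+1)) = 0 := by
  show CD.inner (-c) 0 + CD.inner b (e0 m) = 0
  rw [inner_zero_right, inner_symm, inner_e0_pure b hb, zero_add]

lemma innJK (hc : IsPure c) : CD.inner (pair b c) (te0 (m+1)) = 0 := by
  show CD.inner b 0 + CD.inner c (e0 m) = 0
  rw [inner_zero_right, inner_symm, inner_e0_pure c hc, zero_add]

lemma innJJ (h1 : CD.inner b b + CD.inner c c = 1) :
    CD.inner (pair b c) (pair b c) = 1 := h1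

end InnerVals
end CDX

open CD CDX in
theorem statement3' (n : ℕ) (hn : 2 ≤ n) (a : CD n)
    (ha : CD.IsDoublyPure a) (hna : CD.norm a = 1) :
    (∀ x ∈ CD.Ha a, ∀ y ∈ CD.Ha a, x * y ∈ CD.Ha a) ∧
    ∃ φ : CD 2 →ₗ[ℝ] CD n,
      Function.Injective φ ∧
      LinearMap.range φ = CD.Ha a ∧
      φ (CD.e0 2) = CD.e0 n ∧ φ q1 = CD.tilde a ∧ φ q2 = a ∧ φ q3 = CD.te0 n ∧
      ∀ x y : CD 2, φ (x * y) = φ x * φ y := by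
  obtain ⟨m, rfl⟩ : ∃ m, n = m + 1 := ⟨n - 1, by omega⟩
  obtain ⟨b, c⟩ := a
  obtain ⟨hb, hc⟩ := ha
  have h1 : CD.inner b b + CD.inner c c = 1 := Real.sqrt_eq_one.mp hna
  have htilde : CD.tilde (n := m+1) ((b, c) : CD (m+1)) = pair (-c) b := rfl
  have hae : ((b, c) : CD (m+1)) = pair b c := rfl
  -- multiplication table at level m+1
  have hJJ := mul_JJ hb hc h1
  have hII := mul_II hb hc h1
  have hKK := mul_KK (m := m)
  have hIJ := mul_IJ (b := b) hc h1
  have hJI := mul_JI hb hc h1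
  have hJK := mul_JK (b := b) (c := c)
  have hKJ := mul_KJ' hb hc
  have hIK := mul_IK (b := b) (c := c)
  have hKI := mul_KI hb hc
  -- range
  have hrange : LinearMap.range (phi b c) = CD.Ha (n := m+1) ((b, c) : CD (m+1)) := by
    apply le_antisymm
    · rintro z hz
      obtain ⟨x, rfl⟩ := LinearMap.mem_range.mp hz
      rw [phi_apply]
      have m1 : e0 (m+1) ∈ CD.Ha (n := m+1) ((b, c) : CD (m+1)) :=
        Submodule.subset_span (Set.mem_insert _ _)
      have m2 : pair (-c) b ∈ CD.Ha (n := m+1) ((b, c) : CD (m+1)) := by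
        refine Submodule.subset_span ?_
        rw [← htilde]
        exact Set.mem_insert_of_mem _ (Set.mem_insert _ _)
      have m3 : pair b c ∈ CD.Ha (n := m+1) ((b, c) : CD (m+1)) := by
        refine Submodule.subset_span ?_
        exact Set.mem_insert_of_mem _ (Set.mem_insert_of_mem _ (Set.mem_insert _ _))
      have m4 : te0 (m+1) ∈ CD.Ha (n := m+1) ((b, c) : CD (m+1)) := by
        refine Submodule.subset_span ?_
        exact Set.mem_insert_of_mem _ (Set.mem_insert_of_mem _
          (Set.mem_insert_of_mem _ rfl))
      exact add_mem (add_mem (add_mem (Submodule.smul_mem _ _ m1)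
        (Submodule.smul_mem _ _ m2)) (Submodule.smul_mem _ _ m3)) (Submodule.smul_mem _ _ m4)
    · refine Submodule.span_le.mpr ?_
      rintro z hz
      simp only [Set.mem_insert_iff, Set.mem_singleton_iff] at hz
      rcases hz with rfl | rfl | rfl | rfl
      · exact LinearMap.mem_range.mpr ⟨e0 2, phi_e0 b c⟩
      · exact LinearMap.mem_range.mpr ⟨q1, by rw [phi_q1, htilde]⟩
      · exact LinearMap.mem_range.mpr ⟨q2, by rw [phi_q2, hae]⟩
      · exact LinearMap.mem_range.mpr ⟨q3, phi_q3 b c⟩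
  -- multiplicativity
  have hmul : ∀ x y : CD 2, phi b c (x * y) = phi b c x * phi b c y := by
    intro x y
    rw [decomp' x, decomp' y]
    simp only [mul_add', add_mul', CDX.smul_mul', mul_smul', q11, q12, q13, q21, q22, q23,
      q31, q32, q33, e0_mul, mul_e0, map_add, map_smul, map_neg, smul_neg,
      phi_e0, phi_q1, phi_q2, phi_q3, hJJ, hII, hKK, hIJ, hJI, hJK, hKJ, hIK, hKI]
  -- injectivity
  have hinj : Function.Injective (phi b c) := by
    have key : ∀ x : CD 2, phi b c x = 0 → x = 0 := by
      intro x hx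
      have hexp : ∀ v : CD (m+1), CD.inner v (phi b c x) =
          realOf x.1.1 * CD.inner v (e0 (m+1)) + realOf x.1.2 * CD.inner v (pair (-c) b)
          + realOf x.2.1 * CD.inner v (pair b c) + realOf x.2.2 * CD.inner v (te0 (m+1)) := by
        intro v
        rw [phi_apply, CDX.inner_add_right, CDX.inner_add_right, CDX.inner_add_right,
          CDX.inner_smul_right, CDX.inner_smul_right, CDX.inner_smul_right, CDX.inner_smul_right]
      have hE := hexp (e0 (m+1))
      rw [hx, CDX.inner_zero_right, CDX.inner_e0_e0, innEI hc, innEJ hb, innEK] at hE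
      have hI := hexp (pair (-c) b)
      rw [hx, CDX.inner_zero_right, CDX.inner_symm (pair (-c) b) (e0 (m+1)), innEI hc,
        innII h1, innIJ, innIK hb] at hI
      have hJ := hexp (pair b c)
      rw [hx, CDX.inner_zero_right, CDX.inner_symm (pair b c) (e0 (m+1)), innEJ hb,
        CDX.inner_symm (pair b c) (pair (-c) b), innIJ, innJJ h1, innJK hc] at hJ
      have hK := hexp (te0 (m+1))
      rw [hx, CDX.inner_zero_right, CDX.inner_symm (te0 (m+1)) (e0 (m+1)), innEK,
        CDX.inner_symm (te0 (m+1)) (pair (-c) b), innIK hb,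
        CDX.inner_symm (te0 (m+1)) (pair b c), innJK hc, CDX.inner_te0] at hK
      have r0 : realOf x.1.1 = 0 := by linarith
      have s0 : realOf x.1.2 = 0 := by linarith
      have t0 : realOf x.2.1 = 0 := by linarith
      have u0 : realOf x.2.2 = 0 := by linarith
      refine Prod.ext (Prod.ext ?_ ?_) (Prod.ext ?_ ?_)
      · exact r0
      · exact s0
      · exact t0
      · exact u0
    intro x y hxy
    have h := key (x - y) (by rw [map_sub, hxy, sub_self])
    exact sub_eq_zero.mp h
  -- closure
  have hclosed : ∀ x ∈ CD.Ha (pair b c), ∀ y ∈ CD.Ha (pair b c),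
      x * y ∈ CD.Ha (pair b c) := by
    have hrange' : LinearMap.range (phi b c) = CD.Ha (pair b c) := hrange
    intro x hx y hy
    rw [← hrange'] at hx hy ⊢
    obtain ⟨u, rfl⟩ := LinearMap.mem_range.mp hx
    obtain ⟨v, rfl⟩ := LinearMap.mem_range.mp hy
    rw [← hmul]
    exact LinearMap.mem_range_self _ _
  exact ⟨hclosed, phi b c, hinj, hrange, phi_e0 b c, by rw [phi_q1, htilde],
    by rw [phi_q2, hae], phi_q3 b c, hmul⟩
/-- For `n ≥ 2` and doubly pure `a ∈ A n` with `‖a‖ = 1`, the span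
`ℍ_a` of `{e₀, ã, a, ẽ₀}` is closed under multiplication, and the linear map sending
`e₀ ↦ e₀`, `e₁ ↦ ã`, `e₂ ↦ a`, `e₃ ↦ ẽ₀` is an algebra isomorphism from `A 2 = ℍ`
onto `ℍ_a`. -/
theorem statement3 (n : ℕ) (hn : 2 ≤ n) (a : CD n)
    (ha : CD.IsDoublyPure a) (hna : CD.norm a = 1) :
    (∀ x ∈ CD.Ha a, ∀ y ∈ CD.Ha a, x * y ∈ CD.Ha a) ∧
    ∃ φ : CD 2 →ₗ[ℝ] CD n,
      Function.Injective φ ∧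
      LinearMap.range φ = CD.Ha a ∧
      φ (CD.e0 2) = CD.e0 n ∧ φ q1 = CD.tilde a ∧ φ q2 = a ∧ φ q3 = CD.te0 n ∧
      ∀ x y : CD 2, φ (x * y) = φ x * φ y := by
  exact statement3' n hn a ha hna
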